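/- Let GP(q,k) with q ≡ 1 (mod 2k) have quotient matrix q_{ij} for the partition by cosets α^{i−1}(F_q*)^k of F_q* together with {0}. Then the diagonal entries satisfy q_{i,i} = c_{k−i+2} for 1 ≤ i ≤ k (indices of c taken in {1,...,k}, with c_{k+1} interpreted as c_1), where c_j is the number of common neighbors of two vertices whose difference lies in α^{j−1}(F_q*)^k. -/

import Mathlib

open scoped Classical
open Fin.NatCast

/-- With `Q` the quotient matrix of the coset partition
`{{0}, (Fˣ)^k, ..., α^{k−1}(Fˣ)^k}` of `GP(q,k)` and `c j` the number of common
neighbors of two vertices whose difference lies in `α^{j−1}(Fˣ)^k`, the diagonal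
entries satisfy `Q i i = c (k − i + 2)` for `1 ≤ i ≤ k`, where the index `k + 1`
(arising for `i = 1`) is interpreted as `1`. -/
theorem generalizedPaley_quotient_diagonal {F : Type*} [Field F] [Fintype F]
    (k : ℕ) (hk : 0 < k) (hdvd : 2 * k ∣ Fintype.card F - 1)
    (α : Fˣ) (hα : ∀ x : Fˣ, x ∈ Subgroup.zpowers α)
    (G : SimpleGraph F)
    (hG : ∀ a b : F, G.Adj a b ↔ a ≠ b ∧ ∃ y : Fˣ, (y : F) ^ k = a - b)
    (C : F → Fin (k + 1))
    (hC0 : ∀ v : F, C v = 0 ↔ v = 0)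
    (hCi : ∀ (v : F) (i : ℕ), 1 ≤ i → i ≤ k →
      (C v = (i : Fin (k + 1)) ↔ ∃ y : Fˣ, v = (α : F) ^ (i - 1) * (y : F) ^ k))
    (Q : Fin (k + 1) → Fin (k + 1) → ℕ)
    (hQ : ∀ (v : F) (i : Fin (k + 1)),
      ((G.neighborFinset v).filter (fun u => C u = i)).card = Q i (C v))
    (c : ℕ → ℕ)
    (hc : ∀ (j : ℕ), 1 ≤ j → j ≤ k → ∀ u v : F,
      (∃ y : Fˣ, u - v = (α : F) ^ (j - 1) * (y : F) ^ k) →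
      (G.neighborFinset u ∩ G.neighborFinset v).card = c j) :
    ∀ i : ℕ, 1 ≤ i → i ≤ k →
      Q (i : Fin (k + 1)) (i : Fin (k + 1)) = c (if i = 1 then 1 else k - i + 2) := by
  intro i hi1 hik
  set j : ℕ := if i = 1 then 1 else k - i + 2 with hjdef
  have hj1 : 1 ≤ j := by rw [hjdef]; split <;> omega
  have hjk : j ≤ k := by rw [hjdef]; split <;> omega
  set a : F := (α : F) ^ (i - 1) with ha
  set b : F := (α : F) ^ (j - 1) with hb
  have ha0 : a ≠ 0 := pow_ne_zero _ α.ne_zero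
  have hb0 : b ≠ 0 := pow_ne_zero _ α.ne_zero
  obtain ⟨δ, hδ⟩ : ∃ δ : Fˣ, ((δ : F)) ^ k = a * b := by
    by_cases h1 : i = 1
    · refine ⟨1, ?_⟩
      simp [ha, hb, hjdef, h1]
    · have hj2 : j = k - i + 2 := by rw [hjdef, if_neg h1]
      refine ⟨α, ?_⟩
      rw [ha, hb, ← pow_add]
      congr 1
      omega
  have hCv : C a = (i : Fin (k + 1)) := (hCi a i hi1 hik).2 ⟨1, by simp [ha]⟩
  have hQa := hQ a (i : Fin (k + 1))
  rw [hCv] at hQa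
  have hcb := hc j hj1 hjk b 0 ⟨1, by simp [hb]⟩
  rw [← hQa, ← hcb]
  refine Finset.card_bij' (fun w _ => b * w / (w - a)) (fun x _ => a * x / (x - b))
    ?_ ?_ ?_ ?_
  · -- maps into target
    intro w hw
    simp only [Finset.mem_filter, SimpleGraph.mem_neighborFinset] at hw
    obtain ⟨hadj, hCw⟩ := hw
    obtain ⟨hne, y, hy⟩ := (hG w a).1 hadj.symm
    obtain ⟨z, hz⟩ := (hCi w i hi1 hik).1 hCw
    rw [← ha] at hz
    have hwa : w - a ≠ 0 := sub_ne_zero.2 hne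
    have hw' : w = (y : F) ^ k + a := by rw [hy]; ring
    have hyk : (y : F) ^ k ≠ 0 := pow_ne_zero _ y.ne_zero
    have hkey1 : b * w / (w - a) - b = ((δ : F) / y) ^ k := by
      rw [div_pow, hδ, hw', add_sub_cancel_right]
      field_simp
      ring
    have hkey2 : b * w / (w - a) = ((δ : F) * z / y) ^ k := by
      rw [div_pow, mul_pow, hδ, ← hy, hz]
      ring
    simp only [Finset.mem_inter, SimpleGraph.mem_neighborFinset]
    constructor
    · rw [G.adj_comm, hG]
      refine ⟨?_, ⟨δ / y, by rw [Units.val_div_eq_div_val, hkey1]⟩⟩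
      intro h
      apply pow_ne_zero k (div_ne_zero (Units.ne_zero δ) (Units.ne_zero y))
      rw [← hkey1, h, sub_self]
    · rw [G.adj_comm, hG]
      refine ⟨?_, ⟨δ * z / y, by push_cast [Units.val_div_eq_div_val]; rw [sub_zero]; exact hkey2.symm⟩⟩
      intro h
      apply pow_ne_zero k
        (div_ne_zero (mul_ne_zero (Units.ne_zero δ) (Units.ne_zero z)) (Units.ne_zero y))
      push_cast at hkey2 ⊢
      rw [← hkey2, h]
  · -- inverse maps into source
    intro x hx
    simp only [Finset.mem_inter, SimpleGraph.mem_neighborFinset] at hx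
    obtain ⟨hxb, hx0⟩ := hx
    obtain ⟨hneb, y, hy⟩ := (hG x b).1 hxb.symm
    obtain ⟨hne0, z, hz⟩ := (hG x 0).1 hx0.symm
    rw [sub_zero] at hz
    have hxb0 : x - b ≠ 0 := sub_ne_zero.2 hneb
    have hx' : x = (y : F) ^ k + b := by rw [hy]; ring
    have hyk : (y : F) ^ k ≠ 0 := pow_ne_zero _ y.ne_zero
    have hkey1 : a * x / (x - b) - a = ((δ : F) / y) ^ k := by
      rw [div_pow, hδ, hx', add_sub_cancel_right]
      field_simp
      ring
    have hkey2 : a * x / (x - b) = a * ((z : F) / y) ^ k := by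
      rw [div_pow, ← hy, ← hz]
      ring
    simp only [Finset.mem_filter, SimpleGraph.mem_neighborFinset]
    constructor
    · rw [G.adj_comm, hG]
      refine ⟨?_, ⟨δ / y, by rw [Units.val_div_eq_div_val, hkey1]⟩⟩
      intro h
      apply pow_ne_zero k (div_ne_zero (Units.ne_zero δ) (Units.ne_zero y))
      rw [← hkey1, h, sub_self]
    · rw [hCi _ i hi1 hik, ← ha]
      exact ⟨z / y, by rw [Units.val_div_eq_div_val]; exact hkey2⟩
  · -- left inverse
    intro w hw
    simp only [Finset.mem_filter, SimpleGraph.mem_neighborFinset] at hw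
    obtain ⟨hadj, hCw⟩ := hw
    obtain ⟨hne, y, hy⟩ := (hG w a).1 hadj.symm
    have hwa : w - a ≠ 0 := sub_ne_zero.2 hne
    have hd : b * w / (w - a) - b = b * a / (w - a) := by
      field_simp
      ring
    show a * (b * w / (w - a)) / (b * w / (w - a) - b) = w
    rw [hd]
    field_simp
  · -- right inverse
    intro x hx
    simp only [Finset.mem_inter, SimpleGraph.mem_neighborFinset] at hx
    obtain ⟨hxb, hx0⟩ := hx
    obtain ⟨hneb, y, hy⟩ := (hG x b).1 hxb.symm
    have hxb0 : x - b ≠ 0 := sub_ne_zero.2 hneb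
    have hd : a * x / (x - b) - a = a * b / (x - b) := by
      field_simp
      ring
    show b * (a * x / (x - b)) / (a * x / (x - b) - a) = x
    rw [hd]
    field_simp
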